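/- Let S₁, S₂ be closed linear subspaces of a real Hilbert space H with orthogonal projections P₁, P₂. For any x₀ ∈ H, the alternating sequence x_{2n+1} = P₁ x_{2n}, x_{2n+2} = P₂ x_{2n+1} converges in norm to P_S x₀, where P_S is the orthogonal projection onto S = S₁ ∩ S₂. -/

import Mathlib

open Filter Topology InnerProductSpace

/-- `P` is the nearest point projection of a real Hilbert space onto `C`. -/
def IsNearestPointProj {H : Type*} [NormedAddCommGroup H] [InnerProductSpace ℝ H]
    (C : Set H) (P : H → H) : Prop :=
  ∀ x, P x ∈ C ∧ ∀ y ∈ C, ‖x - P x‖ ≤ ‖x - y‖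

/-- The distance between two sets. -/
noncomputable def setDist {H : Type*} [NormedAddCommGroup H] (C₁ C₂ : Set H) : ℝ :=
  sInf {d : ℝ | ∃ a ∈ C₁, ∃ b ∈ C₂, d = ‖a - b‖}

/-- The alternating sequence starting at `z`, applying `f` then `g` alternately. -/
noncomputable def altSeq {H : Type*} (f g : H → H) (z : H) : ℕ → H
  | 0 => z
  | n + 1 => if Even n then f (altSeq f g z n) else g (altSeq f g z n)

/-- A nearest point projection onto a complete subspace agrees with `orthogonalProjection`. -/
theorem isNearestPointProj_eq {H : Type*} [NormedAddCommGroup H] [InnerProductSpace ℝ H]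
    (K : Submodule ℝ H) [CompleteSpace K] {P : H → H}
    (hP : IsNearestPointProj (K : Set H) P) (u : H) :
    P u = (Submodule.orthogonalProjection K u : H) := by
  have hmem : P u ∈ K := (hP u).1
  have hmin : ‖u - P u‖ = ⨅ w : (↑K : Set H), ‖u - w‖ := by
    refine le_antisymm (le_ciInf fun w => (hP u).2 w w.2) ?_
    exact ciInf_le ⟨0, by rintro r ⟨w, rfl⟩; positivity⟩ (⟨P u, hmem⟩ : (↑K : Set H))
  have := (Submodule.norm_eq_iInf_iff_real_inner_eq_zero K hmem).mp hmin
  exact (Submodule.eq_starProjection_of_mem_of_inner_eq_zero hmem this).symm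

theorem stmt12 {H : Type*} [NormedAddCommGroup H] [InnerProductSpace ℝ H] [CompleteSpace H]
    (S₁ S₂ : Submodule ℝ H) (h₁c : IsClosed (S₁ : Set H)) (h₂c : IsClosed (S₂ : Set H))
    (P₁ P₂ PS : H → H)
    (hP₁ : IsNearestPointProj (S₁ : Set H) P₁) (hP₂ : IsNearestPointProj (S₂ : Set H) P₂)
    (hPS : IsNearestPointProj ((S₁ ⊓ S₂ : Submodule ℝ H) : Set H) PS)
    (x₀ : H) (x : ℕ → H) (hx0 : x 0 = x₀)
    (hodd : ∀ n : ℕ, x (2 * n + 1) = P₁ (x (2 * n)))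
    (heven : ∀ n : ℕ, x (2 * n + 2) = P₂ (x (2 * n + 1))) :
    Tendsto x atTop (𝓝 (PS x₀)) := by
  haveI : CompleteSpace S₁ := h₁c.completeSpace_coe
  haveI : CompleteSpace S₂ := h₂c.completeSpace_coe
  set S : Submodule ℝ H := S₁ ⊓ S₂ with hS
  haveI : CompleteSpace S := by
    have : IsClosed (S : Set H) := by
      rw [hS, Submodule.coe_inf]; exact h₁c.inter h₂c
    exact this.completeSpace_coe
  set Q₁ : H → H := fun v => (Submodule.orthogonalProjection S₁ v : H) with hQ₁
  set Q₂ : H → H := fun v => (Submodule.orthogonalProjection S₂ v : H) with hQ₂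
  -- basic facts about Q₁ Q₂
  have pyth : ∀ (K : Submodule ℝ H) [CompleteSpace K] (v : H),
      ‖v‖ ^ 2 = ‖(Submodule.orthogonalProjection K v : H)‖ ^ 2 + ‖v - (Submodule.orthogonalProjection K v : H)‖ ^ 2 := by
    intro K _ v
    have h0 : ⟪(Submodule.orthogonalProjection K v : H), v - (Submodule.orthogonalProjection K v : H)⟫_ℝ = 0 := by
      rw [real_inner_comm]
      exact Submodule.starProjection_inner_eq_zero (K := K) v _ (SetLike.coe_mem _)
    have := norm_add_sq_real (Submodule.orthogonalProjection K v : H) (v - (Submodule.orthogonalProjection K v : H))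
    rw [h0] at this
    simpa using this
  have normQ : ∀ (K : Submodule ℝ H) [CompleteSpace K] (v : H),
      ‖(Submodule.orthogonalProjection K v : H)‖ ≤ ‖v‖ := by
    intro K _ v
    nlinarith [pyth K v, norm_nonneg (v - (Submodule.orthogonalProjection K v : H)),
      norm_nonneg (Submodule.orthogonalProjection K v : H), norm_nonneg v]
  have pyth₁ : ∀ v : H, ‖v‖ ^ 2 = ‖Q₁ v‖ ^ 2 + ‖v - Q₁ v‖ ^ 2 := fun v => pyth S₁ v
  have pyth₂ : ∀ v : H, ‖v‖ ^ 2 = ‖Q₂ v‖ ^ 2 + ‖v - Q₂ v‖ ^ 2 := fun v => pyth S₂ v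
  -- the abstract alternating sequence
  set seq : H → ℕ → H := altSeq Q₁ Q₂ with hseq
  have seq_zero : ∀ z, seq z 0 = z := fun z => rfl
  have seq_succ : ∀ z n, seq z (n + 1) =
      if Even n then Q₁ (seq z n) else Q₂ (seq z n) := fun z n => rfl
  -- each step is an orthogonal projection step
  have step_pyth : ∀ z n, ‖seq z n‖ ^ 2 = ‖seq z (n + 1)‖ ^ 2 + ‖seq z n - seq z (n + 1)‖ ^ 2 := by
    intro z n
    rw [seq_succ]
    by_cases h : Even n
    · simp only [h, if_true]; exact pyth S₁ (seq z n)
    · simp only [h, if_false]; exact pyth S₂ (seq z n)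
  have seq_norm_anti : ∀ z, Antitone fun n => ‖seq z n‖ := by
    intro z
    refine antitone_nat_of_succ_le fun n => ?_
    nlinarith [step_pyth z n, norm_nonneg (seq z n - seq z (n+1)), norm_nonneg (seq z (n+1)),
      norm_nonneg (seq z n)]
  have seq_norm_le : ∀ z n, ‖seq z n‖ ≤ ‖z‖ := by
    intro z n
    simpa [seq_zero] using seq_norm_anti z (Nat.zero_le n)
  -- linearity in the starting point
  have seq_sub : ∀ a b n, seq a n - seq b n = seq (a - b) n := by
    intro a b n
    induction n with
    | zero => rfl
    | succ n ih =>
      rw [seq_succ, seq_succ, seq_succ]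
      by_cases h : Even n
      · simp only [h, if_true, hQ₁, ← ih, ← Submodule.coe_sub, map_sub]
      · simp only [h, if_false, hQ₂, ← ih, ← Submodule.coe_sub, map_sub]
  -- shift by two
  have seq_shift : ∀ z n, seq (seq z 2) n = seq z (n + 2) := by
    intro z n
    induction n with
    | zero => rfl
    | succ n ih =>
      rw [seq_succ (seq z 2) n, show n + 1 + 2 = (n + 2) + 1 by ring, seq_succ z (n + 2), ih]
      have hpar : Even n ↔ Even (n + 2) := by simp [Nat.even_add]
      by_cases h : Even n
      · rw [if_pos h, if_pos (hpar.mp h)]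
      · rw [if_neg h, if_neg fun hh => h (hpar.mpr hh)]
  -- consecutive differences tend to zero
  have diff_tendsto : ∀ z, Tendsto (fun n => ‖seq z n - seq z (n + 1)‖) atTop (𝓝 0) := by
    intro z
    have hanti : Antitone fun n => ‖seq z n‖ ^ 2 := by
      intro m n h
      have := seq_norm_anti z h
      simp only
      nlinarith [norm_nonneg (seq z n), norm_nonneg (seq z m)]
    have hbdd : BddBelow (Set.range fun n => ‖seq z n‖ ^ 2) := by
      refine ⟨0, ?_⟩; rintro r ⟨n, rfl⟩; positivity
    have hconv := tendsto_atTop_ciInf hanti hbdd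
    have hsub : Tendsto (fun n => ‖seq z n‖ ^ 2 - ‖seq z (n + 1)‖ ^ 2) atTop (𝓝 0) := by
      have h2 := hconv.comp (tendsto_add_atTop_nat 1)
      simpa using hconv.sub h2
    have hsq : Tendsto (fun n => ‖seq z n - seq z (n + 1)‖ ^ 2) atTop (𝓝 0) := by
      refine hsub.congr fun n => ?_
      have := step_pyth z n; linarith
    have := (Real.continuous_sqrt.tendsto 0).comp hsq
    simp only [Function.comp_def, Real.sqrt_sq (norm_nonneg _), Real.sqrt_zero] at this
    exact this
  -- differences of even iterates tend to zero
  have diff2_tendsto : ∀ z, Tendsto (fun n => ‖seq z (2 * n) - seq z (2 * n + 2)‖) atTop (𝓝 0) := by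
    intro z
    have h2n : Tendsto (fun n : ℕ => 2 * n) atTop atTop :=
      tendsto_atTop_mono (fun n => by simp only [id_eq]; omega) tendsto_id
    have h1 := (diff_tendsto z).comp h2n
    have h2 := (diff_tendsto z).comp (h2n.comp (tendsto_add_atTop_nat 0))
    have h2' : Tendsto (fun n => ‖seq z (2 * n + 1) - seq z (2 * n + 2)‖) atTop (𝓝 0) := by
      have := (diff_tendsto z).comp (tendsto_atTop_mono (fun n => by simp only [id_eq]; omega : ∀ n : ℕ, id n ≤ 2 * n + 1) tendsto_id)
      exact this
    have hsum : Tendsto (fun n => ‖seq z (2 * n) - seq z (2 * n + 1)‖ +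
        ‖seq z (2 * n + 1) - seq z (2 * n + 2)‖) atTop (𝓝 0) := by
      simpa using (h1.add h2')
    refine squeeze_zero (fun n => norm_nonneg _) (fun n => ?_) hsum
    have heq : seq z (2 * n) - seq z (2 * n + 2) =
        (seq z (2 * n) - seq z (2 * n + 1)) + (seq z (2 * n + 1) - seq z (2 * n + 2)) := by abel
    rw [heq]
    exact norm_add_le _ _
  -- fixed points of both projections
  have seq_fix : ∀ z, z ∈ S → ∀ n, seq z n = z := by
    intro z hz n
    induction n with
    | zero => rfl
    | succ n ih =>
      rw [seq_succ, ih]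
      by_cases h : Even n
      · simp only [h, if_true, hQ₁]
        exact (Submodule.starProjection_eq_self_iff (K := S₁)).mpr hz.1
      · simp only [h, if_false, hQ₂]
        exact (Submodule.starProjection_eq_self_iff (K := S₂)).mpr hz.2
  -- the range of 1 - Q₂Q₁
  set M := LinearMap.range
    (LinearMap.id - ((S₂.subtype.comp ((Submodule.orthogonalProjection S₂ : H →L[ℝ] S₂) : H →ₗ[ℝ] S₂)).comp
      (S₁.subtype.comp ((Submodule.orthogonalProjection S₁ : H →L[ℝ] S₁) : H →ₗ[ℝ] S₁)))) with hM
  have hMmem : ∀ u : H, u - Q₂ (Q₁ u) ∈ M := by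
    intro u
    exact ⟨u, rfl⟩
  -- Mᗮ ≤ S
  have hMperp : Mᗮ ≤ S := by
    intro z hz
    by_cases hz0 : z = 0
    · simp [hz0]
    have hinner : ⟪z - Q₂ (Q₁ z), z⟫_ℝ = 0 := by
      exact (Submodule.mem_orthogonal M z).mp hz (z - Q₂ (Q₁ z)) (hMmem z)
    have key : ⟪Q₁ z, Q₂ z⟫_ℝ = ‖z‖ ^ 2 := by
      have h1 : ⟪Q₂ (Q₁ z), z⟫_ℝ = ‖z‖ ^ 2 := by
        have := inner_sub_left (𝕜 := ℝ) (z) (Q₂ (Q₁ z)) z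
        rw [real_inner_self_eq_norm_sq] at this
        linarith [hinner, this]
      have h2 := Submodule.inner_starProjection_left_eq_right S₂ (Q₁ z) z
      calc ⟪Q₁ z, Q₂ z⟫_ℝ = ⟪(Submodule.orthogonalProjection S₂ (Q₁ z) : H), z⟫_ℝ := h2.symm
        _ = ‖z‖ ^ 2 := h1
    have hQ1le : ‖Q₁ z‖ ≤ ‖z‖ := normQ S₁ z
    have hQ2le : ‖Q₂ z‖ ≤ ‖z‖ := normQ S₂ z
    have hcs : ⟪Q₁ z, Q₂ z⟫_ℝ ≤ ‖Q₁ z‖ * ‖Q₂ z‖ := real_inner_le_norm _ _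
    have hzpos : (0 : ℝ) < ‖z‖ := norm_pos_iff.mpr hz0
    have hQ1eq : ‖Q₁ z‖ = ‖z‖ := by
      have hm := mul_le_mul_of_nonneg_left hQ2le (norm_nonneg (Q₁ z))
      have ha : ‖z‖ ^ 2 ≤ ‖Q₁ z‖ * ‖Q₂ z‖ := key ▸ hcs
      have hb : ‖z‖ * ‖z‖ ≤ ‖Q₁ z‖ * ‖z‖ := by
        calc ‖z‖ * ‖z‖ = ‖z‖ ^ 2 := (sq ‖z‖).symm
          _ ≤ ‖Q₁ z‖ * ‖Q₂ z‖ := ha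
          _ ≤ ‖Q₁ z‖ * ‖z‖ := hm
      exact le_antisymm hQ1le (le_of_mul_le_mul_right hb hzpos)
    have hz1 : Q₁ z = z := by
      have hp := pyth₁ z
      rw [hQ1eq] at hp
      have hd : ‖z - Q₁ z‖ ^ 2 = 0 := by linarith
      have h0 : z - Q₁ z = 0 := by
        have := pow_eq_zero_iff (n := 2) (by norm_num) |>.mp hd
        exact norm_eq_zero.mp this
      exact (sub_eq_zero.mp h0).symm
    have hz1mem : z ∈ S₁ := hz1 ▸ SetLike.coe_mem _
    have key2 : ⟪z, Q₂ z⟫_ℝ = ‖z‖ ^ 2 := by nth_rewrite 1 [← hz1]; exact key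
    have hip : ⟪z - Q₂ z, Q₂ z⟫_ℝ = 0 :=
      Submodule.starProjection_inner_eq_zero (K := S₂) z _ (SetLike.coe_mem _)
    have hQ2sq : ‖Q₂ z‖ ^ 2 = ‖z‖ ^ 2 := by
      have := inner_sub_left (𝕜 := ℝ) z (Q₂ z) (Q₂ z)
      rw [real_inner_self_eq_norm_sq] at this
      have h2 : ⟪z, Q₂ z⟫_ℝ = ‖Q₂ z‖ ^ 2 := by linarith [hip, this]
      linarith [key2]
    have hz2 : Q₂ z = z := by
      have hp := pyth₂ z
      rw [hQ2sq] at hp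
      have hd : ‖z - Q₂ z‖ ^ 2 = 0 := by linarith
      have h0 : z - Q₂ z = 0 := by
        have := pow_eq_zero_iff (n := 2) (by norm_num) |>.mp hd
        exact norm_eq_zero.mp this
      exact (sub_eq_zero.mp h0).symm
    exact ⟨hz1mem, hz2 ▸ SetLike.coe_mem _⟩
  -- M-elements: alternating sequence tends to 0
  have hMtend : ∀ v ∈ M, Tendsto (fun n => ‖seq v (2 * n)‖) atTop (𝓝 0) := by
    intro v hv
    obtain ⟨u, hu⟩ := hv
    have hv' : v = u - Q₂ (Q₁ u) := by
      rw [← hu]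
      simp only [LinearMap.sub_apply, LinearMap.id_apply, LinearMap.comp_apply,
        Submodule.subtype_apply, ContinuousLinearMap.coe_coe, hQ₁, hQ₂]
    have h2 : seq u 2 = Q₂ (Q₁ u) := by
      rw [seq_succ, seq_succ, if_neg (by decide : ¬ Even 1), if_pos Even.zero, seq_zero]
    rw [hv']
    refine (diff2_tendsto u).congr fun n => ?_
    rw [← seq_sub, ← h2, seq_shift]
  -- closure-of-M elements: alternating sequence tends to 0
  have hclosure : ∀ w : H, w ∈ Sᗮ → Tendsto (seq w) atTop (𝓝 0) := by
    intro w hw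
    have hwcl : w ∈ closure (M : Set H) := by
      have h1 : Sᗮ ≤ Mᗮᗮ := Submodule.orthogonal_le hMperp
      have h2 := Submodule.orthogonal_orthogonal_eq_closure (K := M)
      have := h1 hw
      rw [h2] at this
      exact this
    rw [tendsto_zero_iff_norm_tendsto_zero]
    rw [Metric.tendsto_atTop]
    intro ε hε
    obtain ⟨v, hvM, hvw⟩ := Metric.mem_closure_iff.mp hwcl (ε / 2) (by linarith)
    have hvw' : ‖w - v‖ < ε / 2 := by rwa [dist_eq_norm] at hvw
    obtain ⟨N, hN⟩ := (Metric.tendsto_atTop.mp (hMtend v hvM)) (ε / 2 - ‖w - v‖) (by linarith)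
    refine ⟨2 * N, fun n hn => ?_⟩
    have hstep : ‖seq w n‖ ≤ ‖seq w (2 * N)‖ := seq_norm_anti w hn
    have hsplit : ‖seq w (2 * N)‖ ≤ ‖seq (w - v) (2 * N)‖ + ‖seq v (2 * N)‖ := by
      have : seq w (2 * N) = seq (w - v) (2 * N) + seq v (2 * N) := by
        rw [← seq_sub]; abel
      rw [this]; exact norm_add_le _ _
    have h1 : ‖seq (w - v) (2 * N)‖ ≤ ‖w - v‖ := seq_norm_le _ _
    have h2 : ‖seq v (2 * N)‖ < ε / 2 - ‖w - v‖ := by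
      have := hN N (le_refl N)
      rw [Real.dist_eq] at this
      have h0 : (0:ℝ) ≤ ‖seq v (2 * N)‖ := norm_nonneg _
      rw [abs_of_nonneg (by linarith)] at this
      linarith
    rw [Real.dist_eq, sub_zero, abs_of_nonneg (norm_nonneg _)]
    linarith
  -- identify x with seq x₀
  have hx : ∀ n, x n = seq x₀ n := by
    intro n
    induction n using Nat.strong_induction_on with
    | _ n ih =>
      match n with
      | 0 => simpa [seq_zero] using hx0
      | (n + 1) =>
        rcases Nat.even_or_odd n with ⟨m, hm⟩ | ⟨m, hm⟩
        · have hm' : n = 2 * m := by omega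
          subst hm'
          rw [hodd m, seq_succ]
          have : Even (2 * m) := even_two_mul m
          rw [if_pos this]
          rw [ih (2 * m) (by omega), isNearestPointProj_eq S₁ hP₁]
        · have hm' : n = 2 * m + 1 := by omega
          subst hm'
          rw [heven m, seq_succ]
          have : ¬ Even (2 * m + 1) := by simp [parity_simps]
          rw [if_neg this]
          rw [ih (2 * m + 1) (by omega), isNearestPointProj_eq S₂ hP₂]
  -- decompose x₀
  set s : H := (Submodule.orthogonalProjection S x₀ : H) with hs
  have hPSx : PS x₀ = s := isNearestPointProj_eq S hPS x₀
  have hsmem : s ∈ S := SetLike.coe_mem _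
  have hwperp : x₀ - s ∈ Sᗮ := Submodule.sub_starProjection_mem_orthogonal (K := S) x₀
  have hdecomp : ∀ n, x n = s + seq (x₀ - s) n := by
    intro n
    rw [hx n]
    have := seq_sub x₀ s n
    rw [seq_fix s hsmem n] at this
    rw [← this]
    abel
  rw [hPSx]
  have := (hclosure (x₀ - s) hwperp).const_add s
  rw [add_zero] at this
  exact this.congr fun n => (hdecomp n).symm
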